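/- For every m ≥ 0, the number G(m) defined by the generating function Σ_{m≥0} G(m) x^m = (1-2x)/(1-8x+4x²) satisfies G(m) = Σ_{k=0}^{m} C(2m+1, 2k) · 3^{m-k}. -/

import Mathlib

open Finset

/-- `G(m)`: `G(0) = 1`, `G(1) = 6`, `G(m) = 8·G(m-1) - 4·G(m-2)`, the coefficient
sequence of `(1-2x)/(1-8x+4x²)`. -/
def Gseq : ℕ → ℤ
  | 0 => 1
  | 1 => 6
  | (m + 2) => 8 * Gseq (m + 1) - 4 * Gseq m

open Zsqrtd

private lemma sum_range_even_odd {α : Type*} [AddCommMonoid α] (f : ℕ → α) (n : ℕ) :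
    ∑ j ∈ range (2 * n), f j = (∑ k ∈ range n, f (2 * k)) + ∑ k ∈ range n, f (2 * k + 1) := by
  induction n with
  | zero => simp
  | succ n ih =>
    have : 2 * (n + 1) = 2 * n + 1 + 1 := by ring
    rw [this, sum_range_succ, sum_range_succ, ih, sum_range_succ, sum_range_succ]
    abel

private lemma hs : (sqrtd : ℤ√3) ^ 2 = 3 := by
  rw [sq]; ext <;> simp [Zsqrtd.re_mul, Zsqrtd.im_mul]

private lemma pow_expand (m : ℕ) :
    (1 + sqrtd : ℤ√3) ^ (2 * m + 1)
      = ((∑ k ∈ range (m + 1), ((2 * m + 1).choose (2 * k) : ℤ) * 3 ^ k : ℤ) : ℤ√3)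
        + ((∑ k ∈ range (m + 1), ((2 * m + 1).choose (2 * k + 1) : ℤ) * 3 ^ k : ℤ) : ℤ√3) * sqrtd := by
  rw [add_comm (1 : ℤ√3) sqrtd, add_pow]
  have h22 : 2 * m + 1 + 1 = 2 * (m + 1) := by ring
  rw [h22, sum_range_even_odd (fun j => sqrtd ^ j * 1 ^ (2*m+1-j) * ((2*m+1).choose j : ℤ√3))]
  push_cast
  congr 1
  · refine Finset.sum_congr rfl fun k hk => ?_
    have : (sqrtd : ℤ√3) ^ (2 * k) = ((3:ℤ√3)) ^ k := by
      rw [pow_mul, hs]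
    rw [this, one_pow]
    ring
  · rw [Finset.sum_mul]
    refine Finset.sum_congr rfl fun k hk => ?_
    have : (sqrtd : ℤ√3) ^ (2 * k + 1) = ((3:ℤ√3)) ^ k * sqrtd := by
      rw [pow_succ, pow_mul, hs]
    rw [this, one_pow]
    ring

private lemma gseq_im : ∀ m : ℕ, Gseq m = ((1 + sqrtd : ℤ√3) ^ (2 * m + 1)).im
  | 0 => by simp [Gseq]
  | 1 => by
    show (6 : ℤ) = _
    norm_num [pow_succ, Zsqrtd.im_mul, Zsqrtd.re_mul, Zsqrtd.im_add, Zsqrtd.re_add]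
  | (m + 2) => by
    have h1 := gseq_im (m + 1)
    have h2 := gseq_im m
    have hz : (1 + sqrtd : ℤ√3) ^ 4 = 8 * (1 + sqrtd) ^ 2 - 4 := by
      ext <;>
        simp [pow_succ, Zsqrtd.re_mul, Zsqrtd.im_mul, Zsqrtd.re_add, Zsqrtd.im_add,
          Zsqrtd.re_sub, Zsqrtd.im_sub]
    have key : (1 + sqrtd : ℤ√3) ^ (2 * (m + 2) + 1)
        = 8 * (1 + sqrtd) ^ (2 * (m + 1) + 1) - 4 * (1 + sqrtd) ^ (2 * m + 1) := by
      have e1 : 2 * (m + 2) + 1 = (2 * m + 1) + 4 := by ring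
      have e2 : 2 * (m + 1) + 1 = (2 * m + 1) + 2 := by ring
      rw [e1, e2, pow_add, pow_add, hz]
      ring
    show 8 * Gseq (m + 1) - 4 * Gseq m = _
    rw [key, h1, h2]
    simp [Zsqrtd.im_sub, Zsqrtd.im_mul, Zsqrtd.re_mul]

/-- For every `m ≥ 0`, `G(m) = Σ_{k=0}^{m} C(2m+1, 2k) · 3^{m-k}`. -/
theorem Gseq_eq_binomial_sum (m : ℕ) :
    Gseq m = ∑ k ∈ Finset.range (m + 1),
      ((2 * m + 1).choose (2 * k) : ℤ) * 3 ^ (m - k) := by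
  have him : ((1 + sqrtd : ℤ√3) ^ (2 * m + 1)).im
      = ∑ k ∈ range (m + 1), ((2 * m + 1).choose (2 * k + 1) : ℤ) * 3 ^ k := by
    rw [pow_expand m]
    simp only [Zsqrtd.im_add, Zsqrtd.im_mul, Zsqrtd.im_intCast, Zsqrtd.re_intCast,
      Zsqrtd.im_sqrtd, Zsqrtd.re_sqrtd]
    ring
  rw [gseq_im m, him, ← Finset.sum_range_reflect]
  refine Finset.sum_congr rfl fun k hk => ?_
  have hk' : k ≤ m := by simpa [Nat.lt_succ_iff] using hk
  have e1 : m + 1 - 1 - k = m - k := by omega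
  have e2 : 2 * (m - k) + 1 = 2 * m + 1 - 2 * k := by omega
  rw [e1, e2, Nat.choose_symm (by omega)]
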